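/- Suppose there exists a family 𝒜 of null subsets of 2^ω with ⋃𝒜 = 2^ω and #𝒜 = ℵ_ω, while every family ℬ of null subsets of 2^ω with #ℬ < ℵ_ω satisfies ⋃ℬ ≠ 2^ω. Then COV(N) is not a σ-ideal: there exists a sequence (Xₙ)_{n∈ℕ} of subsets of 2^ω, each belonging to COV(N), such that ⋃ₙ Xₙ ∉ COV(N). -/

import Mathlib

open MeasureTheory Set Pointwise
open scoped ENNReal

/-- The Cantor space `2^ω = ℕ → ZMod 2`, with coordinatewise addition mod 2. -/
abbrev Cantor : Type := ℕ → ZMod 2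

/-- The Haar probability measure on the Cantor space (equivalently, the product of
uniform measures on `ZMod 2`).  Applied to an arbitrary set it gives the outer measure,
so `μ H = 0` says that `H` has outer measure zero, i.e. `H` is null. -/
noncomputable def μ : Measure Cantor :=
  Measure.addHaarMeasure ⟨⟨Set.univ, isCompact_univ⟩, by simp⟩

/-- A set `X ⊆ 2^ω` is strongly meager if `X + H ≠ 2^ω` for every null set `H`. -/
def StronglyMeager (X : Set Cantor) : Prop :=
  ∀ H : Set Cantor, μ H = 0 → X + H ≠ Set.univ

/-- `X ∈ COV(N)`: for every Borel set `H ⊆ 2^ω × 2^ω` all of whose vertical sections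
are null, the sections indexed by `X` do not cover `2^ω`. -/
def CovN (X : Set Cantor) : Prop :=
  ∀ H : Set (Cantor × Cantor), MeasurableSet H →
    (∀ x : Cantor, μ {y | (x, y) ∈ H} = 0) →
    (⋃ x ∈ X, {y | (x, y) ∈ H}) ≠ Set.univ

/-! ### Auxiliary development -/

instance : μ.OuterRegular := by unfold μ; infer_instance
instance : IsFiniteMeasure μ := by unfold μ; infer_instance

/-- A surjective enumeration of finite binary lists. -/
noncomputable def eL : ℕ → List (ZMod 2) :=
  (exists_surjective_nat (List (ZMod 2))).choose

lemma eL_surj : Function.Surjective eL :=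
  (exists_surjective_nat (List (ZMod 2))).choose_spec

/-- Pairing of triples of naturals. -/
noncomputable def pk : ℕ × ℕ × ℕ ≃ ℕ := (Denumerable.eqv _)

/-- The clopen cylinder determined by a finite binary list. -/
def cyl (s : List (ZMod 2)) : Set Cantor := {y | ∀ i < s.length, y i = s.getD i 0}

/-- Cylinder of an optional list: `none` codes the empty set. -/
def ocyl : Option (List (ZMod 2)) → Set Cantor
  | none => ∅
  | some s => cyl s

lemma measurableSet_cyl (s : List (ZMod 2)) : MeasurableSet (cyl s) := by
  have h : cyl s = ⋂ (i : ℕ) (_ : i < s.length), (fun y : Cantor => y i) ⁻¹' {s.getD i 0} := by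
    ext y; simp [cyl]
  rw [h]
  exact MeasurableSet.iInter fun i => MeasurableSet.iInter fun _ =>
    measurable_pi_apply i (measurableSet_singleton _)

lemma measurableSet_ocyl (o : Option (List (ZMod 2))) : MeasurableSet (ocyl o) := by
  cases o with
  | none => exact MeasurableSet.empty
  | some s => exact measurableSet_cyl s

open Classical in
/-- Decode a point of Cantor space into a doubly-indexed family of optional lists. -/
noncomputable def decode (x : Cantor) (k m : ℕ) : Option (List (ZMod 2)) :=
  if h : ∃ i, x (pk (k, m, i)) = 1 then some (eL (Nat.find h)) else none

/-- The `G_δ` set coded by `z`. -/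
def Gz (z : ℕ → ℕ → Option (List (ZMod 2))) : Set Cantor := ⋂ k, ⋃ m, ocyl (z k m)

/-- The universal-style set: `(x, y) ∈ U` iff `y` belongs to the `G_δ` set coded by `x`. -/
def U : Set (Cantor × Cantor) := {p | p.2 ∈ Gz fun k m => decode p.1 k m}

lemma decode_eq_none_iff {x : Cantor} {k m : ℕ} :
    decode x k m = none ↔ ¬ ∃ i, x (pk (k, m, i)) = 1 := by
  classical
  unfold decode; split_ifs with h <;> simp [h]

lemma decode_eq_some_iff {x : Cantor} {k m : ℕ} {s : List (ZMod 2)} :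
    decode x k m = some s ↔
      ∃ i, eL i = s ∧ x (pk (k, m, i)) = 1 ∧ ∀ j < i, x (pk (k, m, j)) ≠ 1 := by
  classical
  unfold decode
  split_ifs with h
  · simp only [Option.some_inj]
    constructor
    · rintro rfl
      exact ⟨Nat.find h, rfl, Nat.find_spec h, fun j hj => Nat.find_min h hj⟩
    · rintro ⟨i, rfl, h1, h2⟩
      congr 1
      exact le_antisymm (Nat.find_min' h h1)
        (le_of_not_gt fun hlt => h2 _ hlt (Nat.find_spec h))
  · simp only [false_iff]
    rintro ⟨i, -, h1, -⟩
    exact h ⟨i, h1⟩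

lemma measurableSet_decode_some {k m : ℕ} {s : List (ZMod 2)} :
    MeasurableSet {x : Cantor | decode x k m = some s} := by
  have h : {x : Cantor | decode x k m = some s} =
      ⋃ (i : ℕ) (_ : eL i = s),
        ((fun x : Cantor => x (pk (k, m, i))) ⁻¹' {1} ∩
          ⋂ (j : ℕ) (_ : j < i), ((fun x : Cantor => x (pk (k, m, j))) ⁻¹' {1})ᶜ) := by
    ext x
    simp only [mem_setOf_eq, decode_eq_some_iff, mem_iUnion, mem_inter_iff, mem_iInter,
      mem_compl_iff, mem_preimage, mem_singleton_iff]
    tauto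
  rw [h]
  exact MeasurableSet.iUnion fun i => MeasurableSet.iUnion fun _ =>
    (measurable_pi_apply _ (measurableSet_singleton _)).inter
      (MeasurableSet.iInter fun j => MeasurableSet.iInter fun _ =>
        (measurable_pi_apply _ (measurableSet_singleton _)).compl)

lemma measurableSet_U : MeasurableSet U := by
  have h : U = ⋂ k, ⋃ m, ⋃ (s : List (ZMod 2)),
      ({x : Cantor | decode x k m = some s} ×ˢ cyl s) := by
    ext ⟨x, y⟩
    simp only [U, Gz, mem_setOf_eq, mem_iInter, mem_iUnion, mem_prod]
    refine forall_congr' fun k => exists_congr fun m => ?_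
    cases h : decode x k m with
    | none => simp [ocyl, h]
    | some s =>
      simp only [ocyl]
      constructor
      · exact fun hy => ⟨s, rfl, hy⟩
      · rintro ⟨s', hs', hy⟩; cases hs'; exact hy
  rw [h]
  exact MeasurableSet.iInter fun k => MeasurableSet.iUnion fun m =>
    MeasurableSet.iUnion fun s => measurableSet_decode_some.prod (measurableSet_cyl s)

/-- Encoding: every code `z` is realized as `decode x` for some `x`. -/
noncomputable def encodeZ (z : ℕ → ℕ → Option (List (ZMod 2))) : Cantor := fun j =>
  match z (pk.symm j).1 (pk.symm j).2.1 with
  | none => 0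
  | some s => if (pk.symm j).2.2 = Nat.find (eL_surj s) then 1 else 0

lemma decode_encodeZ (z : ℕ → ℕ → Option (List (ZMod 2))) (k m : ℕ) :
    decode (encodeZ z) k m = z k m := by
  have key : ∀ i : ℕ, encodeZ z (pk (k, m, i)) =
      match z k m with
      | none => (0 : ZMod 2)
      | some s => if i = Nat.find (eL_surj s) then 1 else 0 := by
    intro i
    unfold encodeZ
    rw [Equiv.symm_apply_apply]
  cases hz : z k m with
  | none =>
    rw [decode_eq_none_iff]
    rintro ⟨i, hi⟩
    rw [key i, hz] at hi
    exact one_ne_zero hi.symm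
  | some s =>
    rw [decode_eq_some_iff]
    refine ⟨Nat.find (eL_surj s), Nat.find_spec (eL_surj s), ?_, ?_⟩
    · rw [key, hz]; simp
    · intro j hj
      rw [key, hz]
      simp [Nat.ne_of_lt hj]

/-- Every open subset of Cantor space is a countable union of (coded) cylinders. -/
lemma getD_ofFn_cantor (y : Cantor) (n a : ℕ) (ha : a < n) :
    (List.ofFn fun i : Fin n => y i).getD a 0 = y a := by
  rw [List.getD_eq_getElem _ 0 (by simpa using ha), List.getElem_ofFn]

lemma exists_code_of_isOpen {O : Set Cantor} (hO : IsOpen O) :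
    ∃ c : ℕ → Option (List (ZMod 2)), (⋃ m, ocyl (c m)) = O := by
  classical
  refine ⟨fun m => if cyl (eL m) ⊆ O then some (eL m) else none, ?_⟩
  apply Set.eq_of_subset_of_subset
  · refine iUnion_subset fun m => ?_
    show ocyl (if cyl (eL m) ⊆ O then some (eL m) else none) ⊆ O
    split_ifs with h
    · exact h
    · exact empty_subset O
  · intro y hy
    obtain ⟨I, u, hu, hsub⟩ := isOpen_pi_iff.1 hO y hy
    obtain ⟨n, hn⟩ : ∃ n : ℕ, ∀ a ∈ I, a < n :=
      ⟨(I.sup id) + 1, fun a ha => Nat.lt_succ_of_le (Finset.le_sup (f := id) ha)⟩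
    have hslen : (List.ofFn fun i : Fin n => y i).length = n := by simp
    have hycyl : y ∈ cyl (List.ofFn fun i : Fin n => y i) := by
      intro i hi
      rw [getD_ofFn_cantor y n i (hslen ▸ hi)]
    have hcylsub : cyl (List.ofFn fun i : Fin n => y i) ⊆ O := by
      intro z hz
      apply hsub
      intro a ha
      have han : a < n := hn a ha
      have hza : z a = y a := by
        have := hz a (hslen.symm ▸ han)
        rwa [getD_ofFn_cantor y n a han] at this
      rw [hza]
      exact (hu a ha).2
    obtain ⟨m, hm⟩ := eL_surj (List.ofFn fun i : Fin n => y i)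
    refine mem_iUnion.2 ⟨m, ?_⟩
    show y ∈ ocyl (if cyl (eL m) ⊆ O then some (eL m) else none)
    rw [hm, if_pos hcylsub]
    exact hycyl

/-- Every null set is contained in a coded null `G_δ` set. -/
lemma exists_code_null_superset {B : Set Cantor} (hB : μ B = 0) :
    ∃ z : ℕ → ℕ → Option (List (ZMod 2)), B ⊆ Gz z ∧ μ (Gz z) = 0 := by
  have hBk : ∀ k : ℕ, ∃ c : ℕ → Option (List (ZMod 2)),
      B ⊆ (⋃ m, ocyl (c m)) ∧ μ (⋃ m, ocyl (c m)) < ((k : ℝ≥0∞))⁻¹ := by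
    intro k
    have h0 : μ B < (k : ℝ≥0∞)⁻¹ := by
      rw [hB]
      exact ENNReal.inv_pos.2 (ENNReal.natCast_ne_top k)
    obtain ⟨O, hBO, hOopen, hOlt⟩ := Set.exists_isOpen_lt_of_lt B _ h0
    obtain ⟨c, hc⟩ := exists_code_of_isOpen hOopen
    exact ⟨c, by rw [hc]; exact hBO, by rw [hc]; exact hOlt⟩
  choose c hc1 hc2 using hBk
  refine ⟨c, fun y hy => mem_iInter.2 fun k => hc1 k hy, ?_⟩
  by_contra hne
  obtain ⟨n, hn⟩ := ENNReal.exists_inv_nat_lt hne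
  have hle : μ (Gz c) ≤ μ (⋃ m, ocyl (c n m)) := measure_mono (iInter_subset _ n)
  exact lt_irrefl _ (hn.trans_le (hle.trans (hc2 n).le))

lemma lt_aleph_omega0 {c : Cardinal} (h : c < Cardinal.aleph Ordinal.omega0) :
    ∃ n : ℕ, c < Cardinal.aleph n := by
  rcases lt_or_ge c Cardinal.aleph0 with hc | hc
  · exact ⟨0, by rwa [Nat.cast_zero, Cardinal.aleph_zero]⟩
  · obtain ⟨o, rfl⟩ := Cardinal.mem_range_aleph_iff.2 hc
    obtain ⟨n, rfl⟩ := Ordinal.lt_omega0.1 (Cardinal.aleph_lt_aleph.1 h)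
    exact ⟨n + 1, Cardinal.aleph_lt_aleph.2 (by exact_mod_cast Nat.lt_succ_self n)⟩

/-- The ordinal `ℵ_ω` (as an ordinal). -/
noncomputable def Wo : Ordinal.{0} := (Cardinal.aleph Ordinal.omega0).ord

/-- `typein` for the canonical order on `o.ToType`. -/
noncomputable def tyin (o : Ordinal.{0}) (w : o.ToType) : Ordinal.{0} :=
  (@Ordinal.typein o.ToType (· < ·) isWellOrder_lt) w

lemma tyin_lt_self (o : Ordinal.{0}) (w : o.ToType) : tyin o w < o := by
  exact Ordinal.typein_lt_self w

lemma tyin_injective (o : Ordinal.{0}) : Function.Injective (tyin o) := by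
  exact fun a b h => @Ordinal.typein_injective o.ToType (· < ·) isWellOrder_lt _ _ h

/-- The initial segments of length `ℵ_n` in a well order of type `ℵ_ω`. -/
noncomputable def Yn (n : ℕ) : Set Wo.ToType :=
  {w | tyin Wo w < (Cardinal.aleph n).ord}

lemma Yn_card (n : ℕ) : Cardinal.mk (Yn n) ≤ Cardinal.aleph n := by
  have hmk : Cardinal.mk ((Cardinal.aleph (n : Ordinal)).ord.ToType) = Cardinal.aleph n := by
    rw [Cardinal.mk_toType, Cardinal.card_ord]
  rw [← hmk]
  have hty : ∀ w : Yn n, tyin Wo w.1 < @Ordinal.type ((Cardinal.aleph (n : Ordinal)).ord.ToType) (· < ·) isWellOrder_lt := by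
    intro w
    rw [Ordinal.type_toType]
    exact w.2
  refine Cardinal.mk_le_of_injective (f := fun w : Yn n =>
    (@Ordinal.enum ((Cardinal.aleph (n : Ordinal)).ord.ToType) (· < ·) isWellOrder_lt)
      ⟨tyin Wo w.1, hty w⟩) ?_
  intro w1 w2 hw
  have h1 := Subtype.ext_iff.1 ((@Ordinal.enum_inj _ (· < ·) isWellOrder_lt _ _).1 hw)
  exact Subtype.ext (tyin_injective Wo h1)

lemma Yn_cover (w : Wo.ToType) : ∃ n : ℕ, w ∈ Yn n := by
  have h2 : (tyin Wo w).card < Cardinal.aleph Ordinal.omega0 :=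
    Cardinal.lt_ord.1 (tyin_lt_self Wo w)
  obtain ⟨n, hn⟩ := lt_aleph_omega0 h2
  exact ⟨n, Cardinal.lt_ord.2 hn⟩

/-- If `cov(N) = ℵ_ω` then `COV(N)` is not a σ-ideal. -/
theorem covN_not_sigma_ideal
    (h1 : ∃ 𝒜 : Set (Set Cantor), (∀ A ∈ 𝒜, μ A = 0) ∧ ⋃₀ 𝒜 = Set.univ ∧
      Cardinal.mk 𝒜 = Cardinal.aleph Ordinal.omega0)
    (h2 : ∀ ℬ : Set (Set Cantor), (∀ B ∈ ℬ, μ B = 0) →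
      Cardinal.mk ℬ < Cardinal.aleph Ordinal.omega0 → ⋃₀ ℬ ≠ Set.univ) :
    ∃ X : ℕ → Set Cantor, (∀ n, CovN (X n)) ∧ ¬ CovN (⋃ n, X n) := by
  classical
  obtain ⟨𝒜, hAnull, hAcover, hAcard⟩ := h1
  -- choose a code point for each member of the covering family
  have hpt : ∀ A : 𝒜, ∃ x : Cantor,
      (A : Set Cantor) ⊆ {y | (x, y) ∈ U} ∧ μ {y | (x, y) ∈ U} = 0 := by
    intro A
    have hB : μ (toMeasurable μ (A : Set Cantor)) = 0 := by
      rw [measure_toMeasurable]; exact hAnull A A.2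
    obtain ⟨z, hz1, hz2⟩ := exists_code_null_superset hB
    have hsect : {y | (encodeZ z, y) ∈ U} = Gz z := by
      have hdz : (fun k m => decode (encodeZ z) k m) = z :=
        funext fun k => funext fun m => decode_encodeZ z k m
      show {y | y ∈ Gz fun k m => decode (encodeZ z) k m} = Gz z
      rw [hdz]
      exact Set.setOf_mem_eq
    exact ⟨encodeZ z, hsect ▸ (subset_toMeasurable μ _).trans hz1, hsect ▸ hz2⟩
  choose xpt hx1 hx2 using hpt
  -- the witness set for failure of CovN
  set T : Set Cantor := (fun x => μ (Prod.mk x ⁻¹' U)) ⁻¹' {0} with hT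
  have hTmeas : MeasurableSet T :=
    (measurable_measure_prodMk_left measurableSet_U) (measurableSet_singleton 0)
  set H : Set (Cantor × Cantor) := U ∩ T ×ˢ (Set.univ : Set Cantor) with hH
  have hHmeas : MeasurableSet H := measurableSet_U.inter (hTmeas.prod MeasurableSet.univ)
  have hHnull : ∀ x : Cantor, μ {y | (x, y) ∈ H} = 0 := by
    intro x
    by_cases hx : x ∈ T
    · refine le_antisymm ?_ zero_le
      have hsub : {y | (x, y) ∈ H} ⊆ Prod.mk x ⁻¹' U := fun y hy => hy.1
      calc μ {y | (x, y) ∈ H} ≤ μ (Prod.mk x ⁻¹' U) := measure_mono hsub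
        _ = 0 := hx
    · have : {y | (x, y) ∈ H} = ∅ :=
        eq_empty_iff_forall_notMem.2 fun y hy => hx hy.2.1
      rw [this, measure_empty]
  have hxT : ∀ A : 𝒜, xpt A ∈ T := fun A => hx2 A
  -- ordinal bookkeeping
  have hmkW : Cardinal.mk Wo.ToType = Cardinal.mk 𝒜 := by
    rw [Cardinal.mk_toType, Wo, Cardinal.card_ord, hAcard]
  obtain ⟨e⟩ : Nonempty (↥𝒜 ≃ Wo.ToType) := Cardinal.eq.1 hmkW.symm
  -- the sequence of sets
  refine ⟨fun n => xpt '' {A : ↥𝒜 | e A ∈ Yn n}, ?_, ?_⟩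
  · -- each piece is in CovN, by h2
    intro n H' hH'meas hH'null hcover
    have hcard : Cardinal.mk ((fun x => {y | (x, y) ∈ H'}) '' (xpt '' {A : ↥𝒜 | e A ∈ Yn n}))
        < Cardinal.aleph Ordinal.omega0 := by
      refine lt_of_le_of_lt (Cardinal.mk_image_le.trans (Cardinal.mk_image_le.trans ?_))
        (Cardinal.aleph_lt_aleph.2 (Ordinal.nat_lt_omega0 n))
      refine le_trans (Cardinal.mk_le_of_injective (f := fun A : {A : ↥𝒜 | e A ∈ Yn n} =>
        (⟨e A.1, A.2⟩ : Yn n)) ?_) (Yn_card n)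
      intro A1 A2 hA
      exact Subtype.ext (e.injective (Subtype.ext_iff.1 hA))
    refine h2 _ ?_ hcard ?_
    · rintro B ⟨x, -, rfl⟩
      exact hH'null x
    · rw [Set.sUnion_image]
      exact hcover
  · -- the union fails CovN, witnessed by H
    intro hCov
    refine hCov H hHmeas hHnull ?_
    rw [Set.eq_univ_iff_forall]
    intro y
    have hy : y ∈ ⋃₀ 𝒜 := hAcover.symm ▸ Set.mem_univ y
    obtain ⟨A, hA, hyA⟩ := hy
    obtain ⟨n, hn⟩ := Yn_cover (e ⟨A, hA⟩)
    refine Set.mem_biUnion ?_ ?_ (x := xpt ⟨A, hA⟩)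
    · exact Set.mem_iUnion.2 ⟨n, Set.mem_image_of_mem _ hn⟩
    · exact ⟨hx1 ⟨A, hA⟩ hyA, hxT ⟨A, hA⟩, Set.mem_univ y⟩
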